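/- Let A = I − K ∈ L(Y) with K ∈ S(Y), suppose A is rich, σ_op(K) is uniformly Montel, and every element of σ_op(A) is injective. Then σ_op(A) is uniformly bounded below: there exists ν > 0 such that ‖B x‖ ≥ ν ‖x‖ for every B ∈ σ_op(A) and every x ∈ Y. If, moreover, there exists a subset σ of σ_op(A) consisting of surjective operators which is S-dense in σ_op(A), then every element of σ_op(A) is bijective and sup_{B ∈ σ_op(A)} ‖B⁻¹‖ < ∞. -/

import Mathlib

open Filter Topology

noncomputable section

/-- `ℤ^N`. -/
abbrev ZN (N : ℕ) := Fin N → ℤ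

/-- The max-norm `|m| = max_i |m_i|` on `ℤ^N`, valued in `ℕ`. -/
def znorm {N : ℕ} (m : ZN N) : ℕ := Finset.univ.sup fun i => (m i).natAbs

/-- `Y = ℓ^∞(ℤ^N, U)`, realised as the bounded (automatically continuous)
functions from the discrete space `ℤ^N` to `U`. -/
abbrev Yinf (N : ℕ) (U : Type*) [NormedAddCommGroup U] [NormedSpace ℂ U] :=
  BoundedContinuousFunction (ZN N) U

/-- `L(Y)` for `Y = ℓ^∞(ℤ^N, U)`. -/
abbrev OpY (N : ℕ) (U : Type*) [NormedAddCommGroup U] [NormedSpace ℂ U] :=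
  Yinf N U →L[ℂ] Yinf N U

variable (N : ℕ) (U : Type*) [NormedAddCommGroup U] [NormedSpace ℂ U]

lemma Pproj_bound (n : ℕ) (x : Yinf N U) (m : ZN N) :
    ‖if znorm m ≤ n then x m else 0‖ ≤ ‖x‖ := by
  by_cases h : znorm m ≤ n
  · simpa [h] using x.norm_coe_le_norm m
  · simp only [if_neg h, norm_zero]; exact norm_nonneg x

/-- The projection `P_n`: `(P_n x)(m) = x(m)` if `|m| ≤ n`, else `0`. -/
def Pproj (n : ℕ) : OpY N U :=
  LinearMap.mkContinuous
    { toFun := fun x => BoundedContinuousFunction.ofNormedAddCommGroup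
        (fun m => if znorm m ≤ n then x m else 0) continuous_of_discreteTopology ‖x‖
        (Pproj_bound N U n x)
      map_add' := fun x y => by
        ext m
        by_cases h : znorm m ≤ n <;>
          simp [BoundedContinuousFunction.coe_ofNormedAddCommGroup, h]
      map_smul' := fun c x => by
        ext m
        by_cases h : znorm m ≤ n <;>
          simp [BoundedContinuousFunction.coe_ofNormedAddCommGroup, h] }
    1
    (fun x => by
      rw [one_mul]
      exact BoundedContinuousFunction.norm_ofNormedAddCommGroup_le
        continuous_of_discreteTopology (norm_nonneg x) (Pproj_bound N U n x))

/-- `Q_n = I - P_n`. -/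
def Qproj (n : ℕ) : OpY N U :=
  ContinuousLinearMap.id ℂ (Yinf N U) - Pproj N U n

/-- The shift `V_k`: `(V_k x)(m) = x(m - k)`. -/
def Vshift (k : ZN N) : OpY N U :=
  LinearMap.mkContinuous
    { toFun := fun x => BoundedContinuousFunction.ofNormedAddCommGroup
        (fun m => x (m - k)) continuous_of_discreteTopology ‖x‖
        (fun m => x.norm_coe_le_norm (m - k))
      map_add' := fun x y => by
        ext m; simp [BoundedContinuousFunction.coe_ofNormedAddCommGroup]
      map_smul' := fun c x => by
        ext m; simp [BoundedContinuousFunction.coe_ofNormedAddCommGroup] }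
    1
    (fun x => by
      rw [one_mul]
      exact BoundedContinuousFunction.norm_ofNormedAddCommGroup_le
        continuous_of_discreteTopology (norm_nonneg x) (fun m => x.norm_coe_le_norm (m - k)))

/-- `V_{-k} A V_k`. -/
def shiftedOp (A : OpY N U) (k : ZN N) : OpY N U :=
  (Vshift N U (-k)).comp (A.comp (Vshift N U k))

/-- Strict convergence in `Y = ℓ^∞(ℤ^N, U)`. -/
def SConvY (x : ℕ → Yinf N U) (x₀ : Yinf N U) : Prop :=
  (∃ C : ℝ, ∀ j, ‖x j‖ ≤ C) ∧
  ∀ m : ℕ, Tendsto (fun j => ‖Pproj N U m (x j - x₀)‖) atTop (𝓝 0)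

/-- `S(Y)`: sequential continuity with respect to strict convergence. -/
def MemSY (A : OpY N U) : Prop :=
  ∀ (x : ℕ → Yinf N U) (x₀ : Yinf N U),
    SConvY N U x x₀ → SConvY N U (fun j => A (x j)) (A x₀)

/-- `M(Y)`: Montel operators. -/
def MemMY (K : OpY N U) : Prop :=
  ∀ x : ℕ → Yinf N U, (∃ C : ℝ, ∀ j, ‖x j‖ ≤ C) →
    ∃ (φ : ℕ → ℕ) (y : Yinf N U), StrictMono φ ∧
      SConvY N U (fun i => K (x (φ i))) y

/-- `B` is the limit of the translates of `A` along `h`. -/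
def LimOpAlongY (A : OpY N U) (h : ℕ → ZN N) (B : OpY N U) : Prop :=
  ∀ m : ℕ,
    Tendsto (fun n => ‖(Pproj N U m).comp (shiftedOp N U A (h n) - B)‖) atTop (𝓝 0) ∧
    Tendsto (fun n => ‖(shiftedOp N U A (h n) - B).comp (Pproj N U m)‖) atTop (𝓝 0)

/-- `B ∈ σ_op(A)`: `B` is a limit operator of `A`. -/
def IsLimOpY (A B : OpY N U) : Prop :=
  ∃ h : ℕ → ZN N, Tendsto (fun n => znorm (h n)) atTop atTop ∧ LimOpAlongY N U A h B

/-- `A` is rich. -/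
def RichY (A : OpY N U) : Prop :=
  ∀ h : ℕ → ZN N, Tendsto (fun n => znorm (h n)) atTop atTop →
    ∃ φ : ℕ → ℕ, StrictMono φ ∧ ∃ B : OpY N U, LimOpAlongY N U A (fun n => h (φ n)) B

/-- A collection of operators is uniformly Montel. -/
def UnifMontel (𝒦 : Set (OpY N U)) : Prop :=
  ∀ Ks : ℕ → OpY N U, (∀ j, Ks j ∈ 𝒦) →
    ∀ x : ℕ → Yinf N U, (∃ C : ℝ, ∀ j, ‖x j‖ ≤ C) →
      ∃ (φ : ℕ → ℕ) (y : Yinf N U), StrictMono φ ∧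
        SConvY N U (fun i => Ks (φ i) (x (φ i))) y

/-- `σ` is `S`-dense in `𝒦`. -/
def SDense (σ 𝒦 : Set (OpY N U)) : Prop :=
  σ ⊆ 𝒦 ∧ ∀ B ∈ 𝒦, ∃ Bj : ℕ → OpY N U, (∀ j, Bj j ∈ σ) ∧
    ∀ x : Yinf N U, SConvY N U (fun j => Bj j x) (B x)

/-- A band operator: a finite sum `Σ_{|k| ≤ w} M_{b_k} V_k` with bounded
operator-valued coefficients, described through its action. -/
def IsBandOpY (A : OpY N U) : Prop :=
  ∃ (w : ℕ) (b : ZN N → ZN N → (U →L[ℂ] U)),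
    (∀ k : ZN N, ∃ C : ℝ, ∀ m : ZN N, ‖b k m‖ ≤ C) ∧
    ∀ (x : Yinf N U) (m : ZN N),
      A x m = ∑ k ∈ Fintype.piFinset (fun _ : Fin N => Finset.Icc (-(w : ℤ)) (w : ℤ)),
        b k m (x (m - k))

/-- A band-dominated operator: a norm limit of band operators. -/
def IsBandDomY (A : OpY N U) : Prop :=
  ∃ As : ℕ → OpY N U, (∀ n, IsBandOpY N U (As n)) ∧
    Tendsto (fun n => ‖As n - A‖) atTop (𝓝 0)

/-- `A` is norm-rich (almost periodic): its translates are relatively compact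
in the operator norm. -/
def NormRichY (A : OpY N U) : Prop :=
  IsCompact (closure {B : OpY N U | ∃ k : ZN N, B = shiftedOp N U A k})

/-- Fredholm: finite dimensional kernel, closed range of finite codimension. -/
def IsFredholmOp {E : Type*} [NormedAddCommGroup E] [NormedSpace ℂ E]
    (A : E →L[ℂ] E) : Prop :=
  FiniteDimensional ℂ (LinearMap.ker (A : E →ₗ[ℂ] E)) ∧
  IsClosed (LinearMap.range (A : E →ₗ[ℂ] E) : Set E) ∧
  FiniteDimensional ℂ (E ⧸ LinearMap.range (A : E →ₗ[ℂ] E))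

end

namespace Stmt1
open Filter Topology
variable {N : ℕ} {U : Type*} [NormedAddCommGroup U] [NormedSpace ℂ U]

lemma znorm_add_le (a b : ZN N) : znorm (a + b) ≤ znorm a + znorm b := by
  refine Finset.sup_le fun i _ => ?_
  calc ((a + b) i).natAbs = (a i + b i).natAbs := rfl
    _ ≤ (a i).natAbs + (b i).natAbs := Int.natAbs_add_le _ _
    _ ≤ znorm a + znorm b :=
      add_le_add (Finset.le_sup (f := fun i => (a i).natAbs) (Finset.mem_univ i))
        (Finset.le_sup (f := fun i => (b i).natAbs) (Finset.mem_univ i))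

lemma znorm_neg (a : ZN N) : znorm (-a) = znorm a := by
  unfold znorm
  congr 1; funext i; simp

lemma znorm_zero : znorm (0 : ZN N) = 0 := by
  simp [znorm]

lemma Pproj_apply (n : ℕ) (x : Yinf N U) (m : ZN N) :
    Pproj N U n x m = if znorm m ≤ n then x m else 0 := rfl

lemma Vshift_apply (k : ZN N) (x : Yinf N U) (m : ZN N) :
    Vshift N U k x m = x (m - k) := rfl

lemma norm_Pproj_le (n : ℕ) : ‖Pproj N U n‖ ≤ 1 :=
  LinearMap.mkContinuous_norm_le _ zero_le_one _

lemma norm_Vshift_le (k : ZN N) : ‖Vshift N U k‖ ≤ 1 :=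
  LinearMap.mkContinuous_norm_le _ zero_le_one _

lemma norm_Pproj_apply_le (n : ℕ) (x : Yinf N U) : ‖Pproj N U n x‖ ≤ ‖x‖ :=
  BoundedContinuousFunction.norm_le_of_nonempty.mpr fun m => by
    rw [Pproj_apply]; exact Pproj_bound N U n x m

lemma norm_Vshift_apply_le (k : ZN N) (x : Yinf N U) : ‖Vshift N U k x‖ ≤ ‖x‖ :=
  BoundedContinuousFunction.norm_le_of_nonempty.mpr fun m => by
    rw [Vshift_apply]; exact x.norm_coe_le_norm (m - k)

/-- `‖P_m (V_k z)‖ ≤ ‖P_{m+|k|} z‖`. -/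
lemma norm_Pproj_Vshift_le (m : ℕ) (k : ZN N) (z : Yinf N U) :
    ‖Pproj N U m (Vshift N U k z)‖ ≤ ‖Pproj N U (m + znorm k) z‖ := by
  refine BoundedContinuousFunction.norm_le_of_nonempty.mpr fun j => ?_
  rw [Pproj_apply]
  by_cases h : znorm j ≤ m
  · rw [if_pos h, Vshift_apply]
    have hjk : znorm (j - k) ≤ m + znorm k := by
      calc znorm (j - k) = znorm (j + (-k)) := by rw [sub_eq_add_neg]
        _ ≤ znorm j + znorm (-k) := znorm_add_le _ _
        _ = znorm j + znorm k := by rw [znorm_neg]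
        _ ≤ m + znorm k := by omega
    calc ‖z (j - k)‖ = ‖Pproj N U (m + znorm k) z (j - k)‖ := by
          rw [Pproj_apply, if_pos hjk]
      _ ≤ ‖Pproj N U (m + znorm k) z‖ := (Pproj N U (m + znorm k) z).norm_coe_le_norm _
  · rw [if_neg h, norm_zero]; exact norm_nonneg _

/-- `V_k (P_m x)` is supported in the ball of radius `m + |k|`. -/
lemma Vshift_Pproj_eq (m : ℕ) (k : ZN N) (x : Yinf N U) :
    Pproj N U (m + znorm k) (Vshift N U k (Pproj N U m x)) =
      Vshift N U k (Pproj N U m x) := by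
  ext j
  rw [Pproj_apply]
  by_cases h : znorm j ≤ m + znorm k
  · rw [if_pos h]
  · rw [if_neg h, Vshift_apply, Pproj_apply, if_neg, eq_comm]
    intro hjk
    exact h (by
      calc znorm j = znorm ((j - k) + k) := by rw [sub_add_cancel]
        _ ≤ znorm (j - k) + znorm k := znorm_add_le _ _
        _ ≤ m + znorm k := by omega)

lemma eq_zero_of_Pproj (z : Yinf N U) (h : ∀ m : ℕ, Pproj N U m z = 0) : z = 0 := by
  ext j
  have h2 := DFunLike.congr_fun (h (znorm j)) j
  rw [Pproj_apply, if_pos le_rfl] at h2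
  simpa using h2

lemma Pproj_comp_Pproj {m n : ℕ} (h : m ≤ n) :
    (Pproj N U m).comp (Pproj N U n) = Pproj N U m := by
  refine ContinuousLinearMap.ext fun x => ?_
  ext j
  rw [ContinuousLinearMap.comp_apply, Pproj_apply, Pproj_apply, Pproj_apply]
  by_cases hj : znorm j ≤ m
  · rw [if_pos hj, if_pos hj, if_pos (le_trans hj h)]
  · rw [if_neg hj, if_neg hj]

lemma Vshift_add (k l : ZN N) :
    Vshift N U (k + l) = (Vshift N U k).comp (Vshift N U l) := by
  refine ContinuousLinearMap.ext fun x => ?_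
  ext m
  rw [ContinuousLinearMap.comp_apply, Vshift_apply, Vshift_apply, Vshift_apply, sub_sub]

lemma Vshift_zero : Vshift N U (0 : ZN N) = ContinuousLinearMap.id ℂ (Yinf N U) := by
  refine ContinuousLinearMap.ext fun x => ?_
  ext m
  rw [Vshift_apply, sub_zero, ContinuousLinearMap.id_apply]

lemma Vshift_neg_comp (k : ZN N) :
    (Vshift N U (-k)).comp (Vshift N U k) = ContinuousLinearMap.id ℂ (Yinf N U) := by
  rw [← Vshift_add, neg_add_cancel, Vshift_zero]

lemma Vshift_comp_neg (k : ZN N) :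
    (Vshift N U k).comp (Vshift N U (-k)) = ContinuousLinearMap.id ℂ (Yinf N U) := by
  rw [← Vshift_add, add_neg_cancel, Vshift_zero]

end Stmt1

namespace Stmt1
open Filter Topology
variable {N : ℕ} {U : Type*} [NormedAddCommGroup U] [NormedSpace ℂ U]

lemma shiftedOp_sub (A B : OpY N U) (k : ZN N) :
    shiftedOp N U (A - B) k = shiftedOp N U A k - shiftedOp N U B k := by
  unfold shiftedOp
  rw [ContinuousLinearMap.sub_comp, ContinuousLinearMap.comp_sub]

lemma shiftedOp_id (k : ZN N) :
    shiftedOp N U (ContinuousLinearMap.id ℂ (Yinf N U)) k =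
      ContinuousLinearMap.id ℂ (Yinf N U) := by
  unfold shiftedOp
  rw [ContinuousLinearMap.id_comp, Vshift_neg_comp]

lemma shiftedOp_add (A : OpY N U) (k v : ZN N) :
    shiftedOp N U A (k + v) = shiftedOp N U (shiftedOp N U A k) v := by
  unfold shiftedOp
  rw [neg_add]
  rw [show (-k + -v : ZN N) = -v + -k from add_comm _ _]
  rw [Vshift_add, Vshift_add]
  ext x
  simp [ContinuousLinearMap.comp_apply]

lemma shiftedOp_apply (A : OpY N U) (k : ZN N) (x : Yinf N U) :
    shiftedOp N U A k x = Vshift N U (-k) (A (Vshift N U k x)) := rfl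

/-- `‖P_m ∘ (V_{-v} D V_v)‖ ≤ ‖P_{m+|v|} ∘ D‖`. -/
lemma norm_Pproj_comp_shiftedOp_le (m : ℕ) (v : ZN N) (D : OpY N U) :
    ‖(Pproj N U m).comp (shiftedOp N U D v)‖ ≤
      ‖(Pproj N U (m + znorm v)).comp D‖ := by
  refine ContinuousLinearMap.opNorm_le_bound _ (norm_nonneg _) fun x => ?_
  rw [ContinuousLinearMap.comp_apply, shiftedOp_apply]
  calc ‖Pproj N U m (Vshift N U (-v) (D (Vshift N U v x)))‖
      ≤ ‖Pproj N U (m + znorm (-v)) (D (Vshift N U v x))‖ := norm_Pproj_Vshift_le _ _ _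
    _ = ‖((Pproj N U (m + znorm v)).comp D) (Vshift N U v x)‖ := by
        rw [znorm_neg, ContinuousLinearMap.comp_apply]
    _ ≤ ‖(Pproj N U (m + znorm v)).comp D‖ * ‖Vshift N U v x‖ :=
        ContinuousLinearMap.le_opNorm _ _
    _ ≤ ‖(Pproj N U (m + znorm v)).comp D‖ * ‖x‖ :=
        mul_le_mul_of_nonneg_left (norm_Vshift_apply_le _ _) (norm_nonneg _)

/-- `‖(V_{-v} D V_v) ∘ P_m‖ ≤ ‖D ∘ P_{m+|v|}‖`. -/
lemma norm_shiftedOp_comp_Pproj_le (m : ℕ) (v : ZN N) (D : OpY N U) :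
    ‖(shiftedOp N U D v).comp (Pproj N U m)‖ ≤
      ‖D.comp (Pproj N U (m + znorm v))‖ := by
  refine ContinuousLinearMap.opNorm_le_bound _ (norm_nonneg _) fun x => ?_
  rw [ContinuousLinearMap.comp_apply, shiftedOp_apply]
  calc ‖Vshift N U (-v) (D (Vshift N U v (Pproj N U m x)))‖
      ≤ ‖D (Vshift N U v (Pproj N U m x))‖ := norm_Vshift_apply_le _ _
    _ = ‖(D.comp (Pproj N U (m + znorm v))) (Vshift N U v (Pproj N U m x))‖ := by
        rw [ContinuousLinearMap.comp_apply, Vshift_Pproj_eq]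
    _ ≤ ‖D.comp (Pproj N U (m + znorm v))‖ * ‖Vshift N U v (Pproj N U m x)‖ :=
        ContinuousLinearMap.le_opNorm _ _
    _ ≤ ‖D.comp (Pproj N U (m + znorm v))‖ * ‖x‖ := by
        refine mul_le_mul_of_nonneg_left ?_ (norm_nonneg _)
        exact le_trans (norm_Vshift_apply_le _ _) (norm_Pproj_apply_le _ _)

end Stmt1

namespace Stmt1
open Filter Topology
variable {N : ℕ} {U : Type*} [NormedAddCommGroup U] [NormedSpace ℂ U]

lemma norm_comp_sub_swap (P D E : OpY N U) :
    ‖P.comp (D - E)‖ = ‖P.comp (E - D)‖ := by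
  rw [show D - E = -(E - D) by abel, ContinuousLinearMap.comp_neg, norm_neg]

lemma norm_sub_comp_swap (P D E : OpY N U) :
    ‖(D - E).comp P‖ = ‖(E - D).comp P‖ := by
  rw [show D - E = -(E - D) by abel, ContinuousLinearMap.neg_comp, norm_neg]

/-- If `B ∈ σ_op(A)` and `A = I - K` then `I - B ∈ σ_op(K)`. -/
lemma limop_IminusK {K A B : OpY N U}
    (hA : A = ContinuousLinearMap.id ℂ (Yinf N U) - K)
    (hB : IsLimOpY N U A B) :
    IsLimOpY N U K (ContinuousLinearMap.id ℂ (Yinf N U) - B) := by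
  obtain ⟨h, htd, hlim⟩ := hB
  refine ⟨h, htd, fun m => ?_⟩
  have key : ∀ n, shiftedOp N U K (h n) - (ContinuousLinearMap.id ℂ (Yinf N U) - B) =
      -(shiftedOp N U A (h n) - B) := by
    intro n
    rw [hA, shiftedOp_sub, shiftedOp_id]
    abel
  constructor
  · have := (hlim m).1
    refine this.congr fun n => ?_
    rw [key, ContinuousLinearMap.comp_neg, norm_neg]
  · have := (hlim m).2
    refine this.congr fun n => ?_
    rw [key, ContinuousLinearMap.neg_comp, norm_neg]

/-- `σ_op(A)` is invariant under conjugation by shifts. -/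
lemma limop_shift {A B : OpY N U} (hB : IsLimOpY N U A B) (v : ZN N) :
    IsLimOpY N U A (shiftedOp N U B v) := by
  obtain ⟨h, htd, hlim⟩ := hB
  refine ⟨fun n => h n + v, ?_, fun m => ?_⟩
  · rw [tendsto_atTop]
    intro b
    filter_upwards [htd.eventually_ge_atTop (b + znorm v)] with n hn
    have : znorm (h n) ≤ znorm (h n + v) + znorm v := by
      calc znorm (h n) = znorm ((h n + v) + (-v)) := by rw [add_neg_cancel_right]
        _ ≤ znorm (h n + v) + znorm (-v) := znorm_add_le _ _
        _ = znorm (h n + v) + znorm v := by rw [znorm_neg]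
    omega
  · have key : ∀ n, shiftedOp N U A (h n + v) - shiftedOp N U B v =
        shiftedOp N U (shiftedOp N U A (h n) - B) v := by
      intro n
      rw [shiftedOp_sub, shiftedOp_add]
    constructor
    · refine squeeze_zero (fun n => norm_nonneg _)
        (fun n => ?_) ((hlim (m + znorm v)).1)
      rw [key]
      exact norm_Pproj_comp_shiftedOp_le m v _
    · refine squeeze_zero (fun n => norm_nonneg _)
        (fun n => ?_) ((hlim (m + znorm v)).2)
      rw [key]
      exact norm_shiftedOp_comp_Pproj_le m v _

lemma sconv_sub_limit {x : ℕ → Yinf N U} {x₀ : Yinf N U} (hx : SConvY N U x x₀) :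
    SConvY N U (fun j => x j - x₀) 0 := by
  obtain ⟨⟨C, hC⟩, hP⟩ := hx
  refine ⟨⟨C + ‖x₀‖, fun j => le_trans (norm_sub_le _ _) (by linarith [hC j])⟩, fun m => ?_⟩
  have := hP m
  refine this.congr fun j => ?_
  rw [sub_zero]

lemma sconv_vshift {x : ℕ → Yinf N U} (k : ZN N) (hx : SConvY N U x 0) :
    SConvY N U (fun j => Vshift N U k (x j)) 0 := by
  obtain ⟨⟨C, hC⟩, hP⟩ := hx
  refine ⟨⟨C, fun j => le_trans (norm_Vshift_apply_le _ _) (hC j)⟩, fun m => ?_⟩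
  refine squeeze_zero (fun j => norm_nonneg _) (fun j => ?_) ((hP (m + znorm k)).congr
    (fun j => by rw [sub_zero]))
  rw [sub_zero]
  exact norm_Pproj_Vshift_le m k (x j)

/-- Limit operators of `A = I - K`, `K ∈ S(Y)`, are strictly continuous. -/
lemma limop_strict {K A B : OpY N U} (hKS : MemSY N U K)
    (hA : A = ContinuousLinearMap.id ℂ (Yinf N U) - K)
    (hB : IsLimOpY N U A B)
    {x : ℕ → Yinf N U} {x₀ : Yinf N U} (hx : SConvY N U x x₀) :
    SConvY N U (fun j => B (x j)) (B x₀) := by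
  obtain ⟨C, hC⟩ := hx.1
  set z : ℕ → Yinf N U := fun j => x j - x₀ with hzdef
  have hz : SConvY N U z 0 := sconv_sub_limit hx
  have hzC : ∀ j, ‖z j‖ ≤ C + ‖x₀‖ := fun j =>
    le_trans (norm_sub_le _ _) (by linarith [hC j])
  set Cz : ℝ := C + ‖x₀‖ + 1 with hCzdef
  have hCz : 0 < Cz := by
    have := le_trans (norm_nonneg (x 0)) (hC 0)
    have := norm_nonneg x₀
    simp only [hCzdef]; linarith
  have hzCz : ∀ j, ‖z j‖ ≤ Cz := fun j => by have := hzC j; simp only [hCzdef]; linarith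
  refine ⟨⟨‖B‖ * C, fun j => le_trans (B.le_opNorm _)
    (mul_le_mul_of_nonneg_left (hC j) (norm_nonneg _))⟩, fun m => ?_⟩
  have hgoal : ∀ j, B (x j) - B x₀ = B (z j) := fun j => by rw [hzdef, map_sub]
  rw [Metric.tendsto_atTop]
  intro ε hε
  obtain ⟨h, htd, hlim⟩ := hB
  obtain ⟨n, hn⟩ := ((hlim m).1.eventually_lt_const
    (show (0:ℝ) < ε / (2 * Cz) by positivity)).exists
  set k := h n with hkdef
  set T := shiftedOp N U A k with hTdef
  -- strict continuity of `T` on `z`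
  have hTz : Tendsto (fun j => ‖Pproj N U m (T (z j))‖) atTop (𝓝 0) := by
    have hTform : ∀ w : Yinf N U, T w = w - shiftedOp N U K k w := by
      intro w
      rw [hTdef, hA, shiftedOp_sub, shiftedOp_id, ContinuousLinearMap.sub_apply,
        ContinuousLinearMap.id_apply]
    have hu : SConvY N U (fun j => Vshift N U k (z j)) 0 := sconv_vshift k hz
    have hKu := hKS _ _ hu
    rw [map_zero] at hKu
    have hKuP := hKu.2 (m + znorm k)
    have hzP := hz.2 m
    have hsum : Tendsto (fun j => ‖Pproj N U m (z j)‖ +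
        ‖Pproj N U (m + znorm k) (K (Vshift N U k (z j)))‖) atTop (𝓝 0) := by
      have h1 := hzP.congr (fun j => by rw [sub_zero])
      have h2 := hKuP.congr (fun j => by rw [sub_zero])
      simpa using h1.add h2
    refine squeeze_zero (fun j => norm_nonneg _) (fun j => ?_) hsum
    rw [hTform]
    calc ‖Pproj N U m (z j - shiftedOp N U K k (z j))‖
        ≤ ‖Pproj N U m (z j)‖ + ‖Pproj N U m (shiftedOp N U K k (z j))‖ := by
          rw [map_sub]; exact norm_sub_le _ _
      _ ≤ _ := by
          refine add_le_add_right ?_ _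
          rw [shiftedOp_apply]
          calc ‖Pproj N U m (Vshift N U (-k) (K (Vshift N U k (z j))))‖
              ≤ ‖Pproj N U (m + znorm (-k)) (K (Vshift N U k (z j)))‖ :=
                norm_Pproj_Vshift_le _ _ _
            _ = _ := by rw [znorm_neg]
  rw [Metric.tendsto_atTop] at hTz
  obtain ⟨n₀, hn₀⟩ := hTz (ε / 2) (by positivity)
  refine ⟨n₀, fun j hj => ?_⟩
  have key : ‖Pproj N U m (B (x j) - B x₀)‖ < ε := by
    rw [hgoal]
    have h1 : ‖Pproj N U m (B (z j) - T (z j))‖ ≤ ε / (2 * Cz) * Cz := by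
      calc ‖Pproj N U m (B (z j) - T (z j))‖
          = ‖((Pproj N U m).comp (B - T)) (z j)‖ := by
            rw [ContinuousLinearMap.comp_apply, ContinuousLinearMap.sub_apply]
        _ ≤ ‖(Pproj N U m).comp (B - T)‖ * ‖z j‖ := ContinuousLinearMap.le_opNorm _ _
        _ ≤ ε / (2 * Cz) * Cz := by
            refine mul_le_mul ?_ (hzCz j) (norm_nonneg _) (by positivity)
            rw [norm_comp_sub_swap]
            exact le_of_lt hn
    have h2 : ‖Pproj N U m (T (z j))‖ < ε / 2 := by
      have := hn₀ j hj
      rwa [Real.dist_eq, sub_zero, abs_of_nonneg (norm_nonneg _)] at this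
    have hsp : ε / (2 * Cz) * Cz = ε / 2 := by field_simp
    calc ‖Pproj N U m (B (z j))‖
        ≤ ‖Pproj N U m (B (z j) - T (z j))‖ + ‖Pproj N U m (T (z j))‖ := by
          rw [show Pproj N U m (B (z j)) = Pproj N U m (B (z j) - T (z j)) +
            Pproj N U m (T (z j)) by rw [← map_add]; congr 1; abel]
          exact norm_add_le _ _
      _ < ε / (2 * Cz) * Cz + ε / 2 := by linarith
      _ = ε := by rw [hsp]; ring
  rw [Real.dist_eq, sub_zero, abs_of_nonneg (norm_nonneg _)]
  exact key

end Stmt1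

namespace Stmt1
open Filter Topology
variable {N : ℕ} {U : Type*} [NormedAddCommGroup U] [NormedSpace ℂ U]

lemma tendsto_one_div_nat : Tendsto (fun n : ℕ => 1 / ((n : ℝ) + 1)) atTop (𝓝 0) :=
  tendsto_one_div_add_atTop_nhds_zero_nat

lemma norm_Pproj_comp_le_of_le {m n : ℕ} (h : m ≤ n) (D : OpY N U) :
    ‖(Pproj N U m).comp D‖ ≤ ‖(Pproj N U n).comp D‖ := by
  have : (Pproj N U m).comp D = (Pproj N U m).comp ((Pproj N U n).comp D) := by
    rw [← ContinuousLinearMap.comp_assoc, Pproj_comp_Pproj h]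
  rw [this]
  calc ‖(Pproj N U m).comp ((Pproj N U n).comp D)‖
      ≤ ‖Pproj N U m‖ * ‖(Pproj N U n).comp D‖ := ContinuousLinearMap.opNorm_comp_le _ _
    _ ≤ 1 * ‖(Pproj N U n).comp D‖ :=
        mul_le_mul_of_nonneg_right (norm_Pproj_le m) (norm_nonneg _)
    _ = _ := one_mul _

lemma Pproj_comp_Pproj' {m n : ℕ} (h : m ≤ n) :
    (Pproj N U n).comp (Pproj N U m) = Pproj N U m := by
  refine ContinuousLinearMap.ext fun x => ?_
  ext j
  simp only [ContinuousLinearMap.comp_apply, Pproj_apply]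
  split_ifs with h1 h2 <;> first | rfl | omega

lemma norm_comp_Pproj_le_of_le {m n : ℕ} (h : m ≤ n) (D : OpY N U) :
    ‖D.comp (Pproj N U m)‖ ≤ ‖D.comp (Pproj N U n)‖ := by
  have heq : D.comp (Pproj N U m) = (D.comp (Pproj N U n)).comp (Pproj N U m) := by
    rw [ContinuousLinearMap.comp_assoc, Pproj_comp_Pproj' h]
  rw [heq]
  calc ‖(D.comp (Pproj N U n)).comp (Pproj N U m)‖
      ≤ ‖D.comp (Pproj N U n)‖ * ‖Pproj N U m‖ := ContinuousLinearMap.opNorm_comp_le _ _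
    _ ≤ ‖D.comp (Pproj N U n)‖ * 1 :=
        mul_le_mul_of_nonneg_left (norm_Pproj_le m) (norm_nonneg _)
    _ = _ := mul_one _

/-- Sequential compactness of `σ_op(A)` for rich `A`, w.r.t. `P`-convergence. -/
lemma limop_compact {A : OpY N U} (hrich : RichY N U A)
    (Bs : ℕ → OpY N U) (hBs : ∀ n, IsLimOpY N U A (Bs n)) :
    ∃ φ : ℕ → ℕ, StrictMono φ ∧ ∃ B : OpY N U, IsLimOpY N U A B ∧
      ∀ m : ℕ,
        Tendsto (fun n => ‖(Pproj N U m).comp (Bs (φ n) - B)‖) atTop (𝓝 0) ∧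
        Tendsto (fun n => ‖(Bs (φ n) - B).comp (Pproj N U m)‖) atTop (𝓝 0) := by
  -- diagonal choice of shifts
  have hsel : ∀ n : ℕ, ∃ k : ZN N, n ≤ znorm k ∧
      ‖(Pproj N U n).comp (shiftedOp N U A k - Bs n)‖ ≤ 1 / ((n : ℝ) + 1) ∧
      ‖(shiftedOp N U A k - Bs n).comp (Pproj N U n)‖ ≤ 1 / ((n : ℝ) + 1) := by
    intro n
    obtain ⟨h, htd, hlim⟩ := hBs n
    have hpos : (0:ℝ) < 1 / ((n : ℝ) + 1) := by positivity
    have e1 := (hlim n).1.eventually_le_const hpos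
    have e2 := (hlim n).2.eventually_le_const hpos
    have e3 := htd.eventually_ge_atTop n
    obtain ⟨j, hj1, hj2, hj3⟩ := (e3.and (e1.and e2)).exists
    exact ⟨h j, hj1, hj2, hj3⟩
  choose k hk1 hk2 hk3 using hsel
  have hktd : Tendsto (fun n => znorm (k n)) atTop atTop :=
    tendsto_atTop_mono hk1 tendsto_id
  obtain ⟨φ, hφ, B, hB⟩ := hrich k hktd
  refine ⟨φ, hφ, B, ⟨fun n => k (φ n), ?_, hB⟩, fun m => ?_⟩
  · refine tendsto_atTop_mono (fun n => ?_) tendsto_id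
    exact le_trans (hφ.le_apply) (hk1 (φ n))
  constructor
  · have hbound : ∀ n, m ≤ φ n → ‖(Pproj N U m).comp (Bs (φ n) - B)‖ ≤
        1 / ((n:ℝ) + 1) + ‖(Pproj N U m).comp (shiftedOp N U A (k (φ n)) - B)‖ := by
      intro n hn
      calc ‖(Pproj N U m).comp (Bs (φ n) - B)‖
          = ‖(Pproj N U m).comp ((Bs (φ n) - shiftedOp N U A (k (φ n))) +
              (shiftedOp N U A (k (φ n)) - B))‖ := by
            congr 2; abel
        _ ≤ ‖(Pproj N U m).comp (Bs (φ n) - shiftedOp N U A (k (φ n)))‖ +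
            ‖(Pproj N U m).comp (shiftedOp N U A (k (φ n)) - B)‖ := by
            rw [ContinuousLinearMap.comp_add]; exact norm_add_le _ _
        _ ≤ 1 / ((n:ℝ) + 1) + ‖(Pproj N U m).comp (shiftedOp N U A (k (φ n)) - B)‖ := by
            refine add_le_add_left ?_ _
            rw [norm_comp_sub_swap]
            calc ‖(Pproj N U m).comp (shiftedOp N U A (k (φ n)) - Bs (φ n))‖
                ≤ ‖(Pproj N U (φ n)).comp (shiftedOp N U A (k (φ n)) - Bs (φ n))‖ :=
                  norm_Pproj_comp_le_of_le hn _
              _ ≤ 1 / ((φ n : ℝ) + 1) := hk2 (φ n)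
              _ ≤ 1 / ((n:ℝ) + 1) := by
                  apply one_div_le_one_div_of_le (by positivity)
                  have hx : (n:ℝ) ≤ (φ n : ℝ) := Nat.cast_le.mpr hφ.le_apply
                  linarith
    have hlim2 : Tendsto (fun n : ℕ => 1 / ((n:ℝ) + 1) +
        ‖(Pproj N U m).comp (shiftedOp N U A (k (φ n)) - B)‖) atTop (𝓝 0) := by
      simpa using tendsto_one_div_nat.add ((hB m).1)
    refine squeeze_zero' (Eventually.of_forall fun n => norm_nonneg _) ?_ hlim2
    filter_upwards [eventually_ge_atTop m] with n hn
    exact hbound n (le_trans hn hφ.le_apply)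
  · have hbound : ∀ n, m ≤ φ n → ‖(Bs (φ n) - B).comp (Pproj N U m)‖ ≤
        1 / ((n:ℝ) + 1) + ‖(shiftedOp N U A (k (φ n)) - B).comp (Pproj N U m)‖ := by
      intro n hn
      calc ‖(Bs (φ n) - B).comp (Pproj N U m)‖
          = ‖((Bs (φ n) - shiftedOp N U A (k (φ n))) +
              (shiftedOp N U A (k (φ n)) - B)).comp (Pproj N U m)‖ := by
            congr 2; abel
        _ ≤ ‖(Bs (φ n) - shiftedOp N U A (k (φ n))).comp (Pproj N U m)‖ +
            ‖(shiftedOp N U A (k (φ n)) - B).comp (Pproj N U m)‖ := by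
            rw [ContinuousLinearMap.add_comp]; exact norm_add_le _ _
        _ ≤ 1 / ((n:ℝ) + 1) + ‖(shiftedOp N U A (k (φ n)) - B).comp (Pproj N U m)‖ := by
            refine add_le_add_left ?_ _
            rw [norm_sub_comp_swap]
            calc ‖(shiftedOp N U A (k (φ n)) - Bs (φ n)).comp (Pproj N U m)‖
                ≤ ‖(shiftedOp N U A (k (φ n)) - Bs (φ n)).comp (Pproj N U (φ n))‖ :=
                  norm_comp_Pproj_le_of_le hn _
              _ ≤ 1 / ((φ n : ℝ) + 1) := hk3 (φ n)
              _ ≤ 1 / ((n:ℝ) + 1) := by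
                  apply one_div_le_one_div_of_le (by positivity)
                  have hx : (n:ℝ) ≤ (φ n : ℝ) := Nat.cast_le.mpr hφ.le_apply
                  linarith
    have hlim2 : Tendsto (fun n : ℕ => 1 / ((n:ℝ) + 1) +
        ‖(shiftedOp N U A (k (φ n)) - B).comp (Pproj N U m)‖) atTop (𝓝 0) := by
      simpa using tendsto_one_div_nat.add ((hB m).2)
    refine squeeze_zero' (Eventually.of_forall fun n => norm_nonneg _) ?_ hlim2
    filter_upwards [eventually_ge_atTop m] with n hn
    exact hbound n (le_trans hn hφ.le_apply)

end Stmt1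


open Stmt1

set_option maxHeartbeats 1000000
set_option linter.unusedVariables false

/-- If `A = I - K` with `K ∈ S(Y)`, `A` rich, `σ_op(K)`
uniformly Montel, and all limit operators of `A` injective, then `σ_op(A)` is
uniformly bounded below; if moreover `σ_op(A)` has an `S`-dense subset of
surjective operators, then all its elements are invertible with uniformly
bounded inverses. -/
theorem statement1 (N : ℕ) (hN : 0 < N) (U : Type*)
    [NormedAddCommGroup U] [NormedSpace ℂ U] [CompleteSpace U]
    (K A : OpY N U) (hKS : MemSY N U K)
    (hA : A = ContinuousLinearMap.id ℂ (Yinf N U) - K)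
    (hrich : RichY N U A)
    (hUM : UnifMontel N U {B | IsLimOpY N U K B})
    (hinj : ∀ B : OpY N U, IsLimOpY N U A B → Function.Injective B) :
    (∃ ν : ℝ, 0 < ν ∧ ∀ B : OpY N U, IsLimOpY N U A B →
      ∀ x : Yinf N U, ν * ‖x‖ ≤ ‖B x‖) ∧
    (∀ σ : Set (OpY N U), SDense N U σ {B | IsLimOpY N U A B} →
      (∀ B ∈ σ, Function.Surjective B) →
      (∀ B : OpY N U, IsLimOpY N U A B → Function.Bijective B) ∧
      ∃ M : ℝ, ∀ B : OpY N U, IsLimOpY N U A B → ∀ Binv : OpY N U,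
        (B.comp Binv = ContinuousLinearMap.id ℂ (Yinf N U) ∧
         Binv.comp B = ContinuousLinearMap.id ℂ (Yinf N U)) → ‖Binv‖ ≤ M) := by
  classical
  have part1 : ∃ ν : ℝ, 0 < ν ∧ ∀ B : OpY N U, IsLimOpY N U A B →
      ∀ x : Yinf N U, ν * ‖x‖ ≤ ‖B x‖ := by
    by_contra hcon
    push_neg at hcon
    -- select bad operators and unit vectors
    have hsel : ∀ n : ℕ, ∃ B : OpY N U, IsLimOpY N U A B ∧ ∃ x : Yinf N U,
        ‖x‖ = 1 ∧ ‖B x‖ < 1 / ((n:ℝ) + 1) := by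
      intro n
      obtain ⟨B, hB, x, hx⟩ := hcon (1 / ((n:ℝ) + 1)) (by positivity)
      have hx0 : x ≠ 0 := by
        rintro rfl
        simp only [map_zero, norm_zero, mul_zero] at hx
        exact lt_irrefl _ hx
      have hxn : (0:ℝ) < ‖x‖ := norm_pos_iff.mpr hx0
      set c : ℂ := ((‖x‖ : ℝ) : ℂ)⁻¹ with hc
      have hcn : ‖c‖ = ‖x‖⁻¹ := by
        rw [hc, norm_inv, Complex.norm_real, Real.norm_of_nonneg (norm_nonneg x)]
      refine ⟨B, hB, c • x, ?_, ?_⟩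
      · rw [norm_smul, hcn, inv_mul_cancel₀ (ne_of_gt hxn)]
      · rw [map_smul, norm_smul, hcn]
        calc ‖x‖⁻¹ * ‖B x‖ < ‖x‖⁻¹ * (1 / ((n:ℝ) + 1) * ‖x‖) := by
              exact mul_lt_mul_of_pos_left hx (by positivity)
          _ = 1 / ((n:ℝ) + 1) := by field_simp
    choose Bsel hBsel ysel hy1 hy2 using hsel
    -- pick points where the unit vectors are large
    have hm : ∀ n : ℕ, ∃ mm : ZN N, 1/2 < ‖ysel n mm‖ := by
      intro n
      by_contra hno
      push_neg at hno
      have : ‖ysel n‖ ≤ 1/2 := BoundedContinuousFunction.norm_le_of_nonempty.mpr hno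
      rw [hy1 n] at this
      norm_num at this
    choose mm hmm using hm
    set xs : ℕ → Yinf N U := fun n => Vshift N U (-(mm n)) (ysel n) with hxsdef
    set Ds : ℕ → OpY N U := fun n => shiftedOp N U (Bsel n) (mm n) with hDsdef
    have f1 : ∀ n, IsLimOpY N U A (Ds n) := fun n => limop_shift (hBsel n) (mm n)
    have f2 : ∀ n, ‖xs n‖ ≤ 1 := fun n => by
      rw [hxsdef]
      exact le_trans (norm_Vshift_apply_le _ _) (le_of_eq (hy1 n))
    have f3 : ∀ n, 1/2 < ‖Pproj N U 0 (xs n)‖ := by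
      intro n
      have h0 : Pproj N U 0 (xs n) (0 : ZN N) = ysel n (mm n) := by
        rw [Pproj_apply, if_pos (le_of_eq znorm_zero), hxsdef]
        show ysel n ((0 : ZN N) - -(mm n)) = _
        rw [zero_sub, neg_neg]
      calc (1:ℝ)/2 < ‖ysel n (mm n)‖ := hmm n
        _ = ‖Pproj N U 0 (xs n) (0 : ZN N)‖ := by rw [h0]
        _ ≤ ‖Pproj N U 0 (xs n)‖ := BoundedContinuousFunction.norm_coe_le_norm _ _
    have f4 : ∀ n, ‖Ds n (xs n)‖ < 1 / ((n:ℝ) + 1) := by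
      intro n
      have hvv : Vshift N U (mm n) (Vshift N U (-(mm n)) (ysel n)) = ysel n := by
        have := ContinuousLinearMap.ext_iff.mp (Vshift_comp_neg (N := N) (U := U) (mm n))
          (ysel n)
        rwa [ContinuousLinearMap.comp_apply, ContinuousLinearMap.id_apply] at this
      have : Ds n (xs n) = Vshift N U (-(mm n)) (Bsel n (ysel n)) := by
        rw [hDsdef, hxsdef]
        show shiftedOp N U (Bsel n) (mm n) (Vshift N U (-(mm n)) (ysel n)) = _
        rw [shiftedOp_apply, hvv]
      rw [this]
      exact lt_of_le_of_lt (norm_Vshift_apply_le _ _) (hy2 n)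
    obtain ⟨φ1, hφ1, B, hBlim, hP⟩ := limop_compact hrich Ds f1
    obtain ⟨φ2, y0, hφ2, hsc⟩ := hUM
      (fun i => ContinuousLinearMap.id ℂ (Yinf N U) - Ds (φ1 i))
      (fun i => limop_IminusK hA (f1 (φ1 i)))
      (fun i => xs (φ1 i)) ⟨1, fun i => f2 _⟩
    simp only [ContinuousLinearMap.sub_apply, ContinuousLinearMap.id_apply] at hsc
    set ψ : ℕ → ℕ := fun i => φ1 (φ2 i) with hψdef
    have hψmono : StrictMono ψ := hφ1.comp hφ2
    -- hsc : SConvY (fun i => xs (ψ i) - Ds (ψ i) (xs (ψ i))) y0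
    have hDu0 : Tendsto (fun i => ‖Ds (ψ i) (xs (ψ i))‖) atTop (𝓝 0) := by
      refine squeeze_zero (fun i => norm_nonneg _) (fun i => ?_) tendsto_one_div_nat
      refine le_trans (le_of_lt (f4 (ψ i))) ?_
      apply one_div_le_one_div_of_le (by positivity)
      have : (i:ℝ) ≤ (ψ i : ℝ) := Nat.cast_le.mpr hψmono.le_apply
      linarith
    have huy : SConvY N U (fun i => xs (ψ i)) y0 := by
      refine ⟨⟨1, fun i => f2 _⟩, fun m => ?_⟩
      have hsum := ((hsc.2 m).add hDu0)
      rw [add_zero] at hsum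
      refine squeeze_zero (fun i => norm_nonneg _) (fun i => ?_) hsum
      calc ‖Pproj N U m (xs (ψ i) - y0)‖
          = ‖Pproj N U m (xs (ψ i) - Ds (ψ i) (xs (ψ i)) - y0) +
              Pproj N U m (Ds (ψ i) (xs (ψ i)))‖ := by
            rw [← map_add]
            exact congrArg (fun z => ‖Pproj N U m z‖) (by abel)
        _ ≤ ‖Pproj N U m (xs (ψ i) - Ds (ψ i) (xs (ψ i)) - y0)‖ +
            ‖Pproj N U m (Ds (ψ i) (xs (ψ i)))‖ := norm_add_le _ _
        _ ≤ ‖Pproj N U m (xs (ψ i) - Ds (ψ i) (xs (ψ i)) - y0)‖ +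
            ‖Ds (ψ i) (xs (ψ i))‖ := by
            exact add_le_add_right (norm_Pproj_apply_le _ _) _
    have h12 : (1:ℝ)/2 ≤ ‖Pproj N U 0 y0‖ := by
      by_contra hlt
      push_neg at hlt
      obtain ⟨i, hi⟩ := ((huy.2 0).eventually_lt_const
        (show (0:ℝ) < 1/2 - ‖Pproj N U 0 y0‖ by linarith)).exists
      have htri : ‖Pproj N U 0 (xs (ψ i))‖ ≤ ‖Pproj N U 0 y0‖ +
          ‖Pproj N U 0 (xs (ψ i) - y0)‖ := by
        calc ‖Pproj N U 0 (xs (ψ i))‖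
            = ‖Pproj N U 0 y0 + Pproj N U 0 (xs (ψ i) - y0)‖ := by
              rw [← map_add]
              exact congrArg (fun z => ‖Pproj N U 0 z‖) (by abel)
          _ ≤ _ := norm_add_le _ _
      have := f3 (ψ i)
      linarith
    have hy0ne : y0 ≠ 0 := by
      intro h
      rw [h, map_zero, norm_zero] at h12
      linarith
    have hBy : B y0 = 0 := by
      have hBu := limop_strict hKS hA hBlim huy
      have hzero : ∀ m, Pproj N U m (B y0) = 0 := by
        intro m
        have t1 : Tendsto (fun i => ‖Pproj N U m (B y0 - B (xs (ψ i)))‖) atTop (𝓝 0) := by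
          refine (hBu.2 m).congr fun i => ?_
          rw [map_sub, map_sub, norm_sub_rev]
        have t2 : Tendsto (fun i => ‖Pproj N U m (B (xs (ψ i)) -
            Ds (ψ i) (xs (ψ i)))‖) atTop (𝓝 0) := by
          have hcv : Tendsto (fun i =>
              ‖(Pproj N U m).comp (Ds (ψ i) - B)‖ * 1) atTop (𝓝 0) := by
            have := ((hP m).1.comp hφ2.tendsto_atTop).mul_const (1:ℝ)
            rwa [zero_mul] at this
          refine squeeze_zero (fun i => norm_nonneg _) (fun i => ?_) hcv
          calc ‖Pproj N U m (B (xs (ψ i)) - Ds (ψ i) (xs (ψ i)))‖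
              = ‖((Pproj N U m).comp (B - Ds (ψ i))) (xs (ψ i))‖ := by
                rw [ContinuousLinearMap.comp_apply, ContinuousLinearMap.sub_apply]
            _ ≤ ‖(Pproj N U m).comp (B - Ds (ψ i))‖ * ‖xs (ψ i)‖ :=
                ContinuousLinearMap.le_opNorm _ _
            _ ≤ ‖(Pproj N U m).comp (Ds (ψ i) - B)‖ * 1 := by
                rw [norm_comp_sub_swap]
                exact mul_le_mul_of_nonneg_left (f2 _) (norm_nonneg _)
        have t3 : Tendsto (fun i => ‖Pproj N U m (Ds (ψ i) (xs (ψ i)))‖) atTop (𝓝 0) := by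
          refine squeeze_zero (fun i => norm_nonneg _) (fun i => norm_Pproj_apply_le _ _)
            hDu0
        have hle : ∀ i, ‖Pproj N U m (B y0)‖ ≤
            ‖Pproj N U m (B y0 - B (xs (ψ i)))‖ +
            ‖Pproj N U m (B (xs (ψ i)) - Ds (ψ i) (xs (ψ i)))‖ +
            ‖Pproj N U m (Ds (ψ i) (xs (ψ i)))‖ := by
          intro i
          calc ‖Pproj N U m (B y0)‖
              = ‖(Pproj N U m (B y0 - B (xs (ψ i))) +
                  Pproj N U m (B (xs (ψ i)) - Ds (ψ i) (xs (ψ i)))) +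
                  Pproj N U m (Ds (ψ i) (xs (ψ i)))‖ := by
                rw [← map_add, ← map_add]
                exact congrArg (fun z => ‖Pproj N U m z‖) (by abel)
            _ ≤ _ := le_trans (norm_add_le _ _)
                (add_le_add_left (norm_add_le _ _) _)
        have htot : Tendsto (fun i => ‖Pproj N U m (B y0 - B (xs (ψ i)))‖ +
            ‖Pproj N U m (B (xs (ψ i)) - Ds (ψ i) (xs (ψ i)))‖ +
            ‖Pproj N U m (Ds (ψ i) (xs (ψ i)))‖) atTop (𝓝 0) := by
          have := (t1.add t2).add t3
          simpa using this
        have hle0 : ‖Pproj N U m (B y0)‖ ≤ 0 :=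
          ge_of_tendsto htot (Eventually.of_forall hle)
        exact norm_eq_zero.mp (le_antisymm hle0 (norm_nonneg _))
      exact eq_zero_of_Pproj _ hzero
    exact hy0ne (hinj B hBlim (by rw [hBy, map_zero]))
  obtain ⟨ν, hν, hbb⟩ := part1
  refine ⟨⟨ν, hν, hbb⟩, ?_⟩
  intro σ hσ hsurj
  obtain ⟨hσsub, hσden⟩ := hσ
  have hbij : ∀ B : OpY N U, IsLimOpY N U A B → Function.Bijective B := by
    intro B hB
    refine ⟨hinj B hB, fun y => ?_⟩
    obtain ⟨Bj, hBjσ, hBjconv⟩ := hσden B hB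
    have hBjlim : ∀ j, IsLimOpY N U A (Bj j) := fun j => hσsub (hBjσ j)
    have hxs : ∀ j, ∃ x, Bj j x = y := fun j => hsurj _ (hBjσ j) y
    choose xs hxs using hxs
    have hxsb : ∀ j, ‖xs j‖ ≤ ‖y‖ / ν := by
      intro j
      have h1 := hbb _ (hBjlim j) (xs j)
      rw [hxs j] at h1
      rw [le_div_iff₀ hν, mul_comm]
      exact h1
    obtain ⟨φ1, hφ1, B', hB'lim, hP⟩ := limop_compact hrich Bj hBjlim
    have hBB' : B' = B := by
      refine ContinuousLinearMap.ext fun x => ?_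
      have hzero : ∀ m, Pproj N U m (B' x - B x) = 0 := by
        intro m
        have t1 : Tendsto (fun n => ‖Pproj N U m (Bj (φ1 n) x - B x)‖) atTop (𝓝 0) :=
          ((hBjconv x).2 m).comp hφ1.tendsto_atTop
        have t2 : Tendsto (fun n => ‖Pproj N U m (B' x - Bj (φ1 n) x)‖) atTop (𝓝 0) := by
          have hcv : Tendsto (fun n =>
              ‖(Pproj N U m).comp (Bj (φ1 n) - B')‖ * ‖x‖) atTop (𝓝 0) := by
            have := (hP m).1.mul_const ‖x‖
            rwa [zero_mul] at this
          refine squeeze_zero (fun n => norm_nonneg _) (fun n => ?_) hcv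
          calc ‖Pproj N U m (B' x - Bj (φ1 n) x)‖
              = ‖((Pproj N U m).comp (B' - Bj (φ1 n))) x‖ := by
                rw [ContinuousLinearMap.comp_apply, ContinuousLinearMap.sub_apply]
            _ ≤ ‖(Pproj N U m).comp (B' - Bj (φ1 n))‖ * ‖x‖ :=
                ContinuousLinearMap.le_opNorm _ _
            _ = ‖(Pproj N U m).comp (Bj (φ1 n) - B')‖ * ‖x‖ := by
                rw [norm_comp_sub_swap]
        have hle : ∀ n, ‖Pproj N U m (B' x - B x)‖ ≤
            ‖Pproj N U m (B' x - Bj (φ1 n) x)‖ +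
            ‖Pproj N U m (Bj (φ1 n) x - B x)‖ := by
          intro n
          calc ‖Pproj N U m (B' x - B x)‖
              = ‖Pproj N U m (B' x - Bj (φ1 n) x) +
                  Pproj N U m (Bj (φ1 n) x - B x)‖ := by
                rw [← map_add]
                exact congrArg (fun z => ‖Pproj N U m z‖) (by abel)
            _ ≤ _ := norm_add_le _ _
        have htot := t2.add t1
        rw [add_zero] at htot
        have hle0 : ‖Pproj N U m (B' x - B x)‖ ≤ 0 :=
          ge_of_tendsto htot (Eventually.of_forall hle)
        exact norm_eq_zero.mp (le_antisymm hle0 (norm_nonneg _))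
      exact sub_eq_zero.mp (eq_zero_of_Pproj _ hzero)
    rw [hBB'] at hP
    obtain ⟨φ2, w, hφ2, hsc⟩ := hUM
      (fun i => ContinuousLinearMap.id ℂ (Yinf N U) - Bj (φ1 i))
      (fun i => limop_IminusK hA (hBjlim (φ1 i)))
      (fun i => xs (φ1 i)) ⟨‖y‖ / ν, fun i => hxsb _⟩
    simp only [ContinuousLinearMap.sub_apply, ContinuousLinearMap.id_apply, hxs] at hsc
    set ψ : ℕ → ℕ := fun i => φ1 (φ2 i) with hψdef
    -- hsc : SConvY (fun i => xs (ψ i) - y) w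
    have hux : SConvY N U (fun i => xs (ψ i)) (w + y) := by
      refine ⟨⟨‖y‖ / ν, fun i => hxsb _⟩, fun m => ?_⟩
      refine (hsc.2 m).congr fun i => ?_
      rw [show xs (ψ i) - y - w = xs (ψ i) - (w + y) from by abel]
    refine ⟨w + y, ?_⟩
    have hBu := limop_strict hKS hA hB hux
    have hzero : ∀ m, Pproj N U m (B (w + y) - y) = 0 := by
      intro m
      have t1 : Tendsto (fun i => ‖Pproj N U m (B (w + y) - B (xs (ψ i)))‖)
          atTop (𝓝 0) := by
        refine (hBu.2 m).congr fun i => ?_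
        rw [map_sub, map_sub, norm_sub_rev]
      have t2 : Tendsto (fun i => ‖Pproj N U m (B (xs (ψ i)) - y)‖) atTop (𝓝 0) := by
        have hcv : Tendsto (fun i =>
            ‖(Pproj N U m).comp (Bj (ψ i) - B)‖ * (‖y‖ / ν)) atTop (𝓝 0) := by
          have := ((hP m).1.comp hφ2.tendsto_atTop).mul_const (‖y‖ / ν)
          rwa [zero_mul] at this
        refine squeeze_zero (fun i => norm_nonneg _) (fun i => ?_) hcv
        calc ‖Pproj N U m (B (xs (ψ i)) - y)‖
            = ‖((Pproj N U m).comp (B - Bj (ψ i))) (xs (ψ i))‖ := by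
              rw [ContinuousLinearMap.comp_apply, ContinuousLinearMap.sub_apply, hxs]
          _ ≤ ‖(Pproj N U m).comp (B - Bj (ψ i))‖ * ‖xs (ψ i)‖ :=
              ContinuousLinearMap.le_opNorm _ _
          _ ≤ ‖(Pproj N U m).comp (Bj (ψ i) - B)‖ * (‖y‖ / ν) := by
              rw [norm_comp_sub_swap]
              exact mul_le_mul_of_nonneg_left (hxsb _) (norm_nonneg _)
      have hle : ∀ i, ‖Pproj N U m (B (w + y) - y)‖ ≤
          ‖Pproj N U m (B (w + y) - B (xs (ψ i)))‖ +
          ‖Pproj N U m (B (xs (ψ i)) - y)‖ := by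
        intro i
        calc ‖Pproj N U m (B (w + y) - y)‖
            = ‖Pproj N U m (B (w + y) - B (xs (ψ i))) +
                Pproj N U m (B (xs (ψ i)) - y)‖ := by
              rw [← map_add]
              exact congrArg (fun z => ‖Pproj N U m z‖) (by abel)
          _ ≤ _ := norm_add_le _ _
      have htot := t1.add t2
      rw [add_zero] at htot
      have hle0 : ‖Pproj N U m (B (w + y) - y)‖ ≤ 0 :=
        ge_of_tendsto htot (Eventually.of_forall hle)
      exact norm_eq_zero.mp (le_antisymm hle0 (norm_nonneg _))
    exact sub_eq_zero.mp (eq_zero_of_Pproj _ hzero)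
  refine ⟨hbij, ⟨1/ν, ?_⟩⟩
  intro B hB Binv hinv
  obtain ⟨hBr, _⟩ := hinv
  refine ContinuousLinearMap.opNorm_le_bound _ (by positivity) fun x => ?_
  have h1 : ν * ‖Binv x‖ ≤ ‖B (Binv x)‖ := hbb B hB (Binv x)
  have h2 : B (Binv x) = x := by
    rw [← ContinuousLinearMap.comp_apply, hBr, ContinuousLinearMap.id_apply]
  rw [h2] at h1
  have h3 : ‖Binv x‖ ≤ ‖x‖ / ν := by
    rw [le_div_iff₀ hν, mul_comm]
    exact h1
  rw [one_div, ← div_eq_inv_mul]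
  exact h3
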